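/- arXiv:1612.02587 — 2 statements merged into one kernel-verified Lean document; each statement's English description precedes it below -/
import Mathlib

section
/- In a separative valuation algebra with units or strong combination, if d(ψ) = y ≤ x ≤ d(φ), then the conditional of the product π_x(φ)·ψ satisfies (π_x(φ)·ψ)_{x|y} = φ_{x|y}·f_ψ, where f_ψ is the group unit of ψ. -/
/-- A commutative semigroup which is a (disjoint) union of groups:
`e a` is the unit of the group containing `a`, `inv a` its inverse there. -/
structure UnionOfGroups (G : Type*) [CommSemigroup G] where
  e : G → G
  inv : G → G
  e_idem : ∀ a, e a * e a = e a
  mul_unit : ∀ a, a * e a = a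
  mul_inv : ∀ a, a * inv a = e a

/-- A separative valuation algebra `Psi` together with its embedding extension
semigroup `P = Ψ⁰`, a union of disjoint groups.  `e a` is the unit of the group
`δ(a)` containing `a`, `inv a` the group inverse, `d` the labeling, `p` the
projection (total on `Psi` for `x ≤ d a`).  Axioms A1-A5 (with the strong
combination axiom A5') and the separativity conditions S1, S2 are recorded. -/
structure SVA (P : Type*) (D : Type*) [CommSemigroup P] [Lattice D] where
  e : P → P
  inv : P → P
  e_idem : ∀ a, e a * e a = e a
  mul_unit : ∀ a, a * e a = a
  mul_inv : ∀ a, a * inv a = e a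
  e_mul : ∀ a b, e (a * b) = e a * e b
  e_inv : ∀ a, e (inv a) = e a
  d : P → D
  d_mul : ∀ a b, d (a * b) = d a ⊔ d b
  d_inv : ∀ a, d (inv a) = d a
  Psi : Set P
  Psi_mul : ∀ {a b}, a ∈ Psi → b ∈ Psi → a * b ∈ Psi
  p : P → D → P
  p_mem : ∀ {a} (x : D), a ∈ Psi → x ≤ d a → p a x ∈ Psi
  d_p : ∀ {a} (x : D), a ∈ Psi → x ≤ d a → d (p a x) = x
  p_self : ∀ {a}, a ∈ Psi → p a (d a) = a
  p_trans : ∀ {a} (x y : D), a ∈ Psi → x ≤ y → y ≤ d a → p (p a y) x = p a x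
  strong_comb : ∀ {a b} (z : D), a ∈ Psi → b ∈ Psi → d a ≤ z → z ≤ d a ⊔ d b →
    p (a * b) z = a * p b (z ⊓ d b)
  sep : ∀ {a} (x : D), a ∈ Psi → x ≤ d a → e (a * p a x) = e a

namespace SVA

variable {P : Type*} {D : Type*} [CommSemigroup P] [Lattice D]

/-- The domination order between the groups: `δ(a) ≤ δ(b)` iff `f_a · f_b = f_b`. -/
def domLe (V : SVA P D) (a b : P) : Prop := V.e a * V.e b = V.e b

/-- `π_x(η)` exists for `η ∈ Ψ⁰`: `η = φ·ψ⁻¹` with `φ, ψ ∈ Ψ`,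
`d(ψ) ≤ x ≤ d(φ)` and `δ(ψ) ≤ δ(φ)`. -/
def extProjDef (V : SVA P D) (η : P) (x : D) : Prop :=
  ∃ φ ψ, φ ∈ V.Psi ∧ ψ ∈ V.Psi ∧ η = φ * V.inv ψ ∧
    V.d ψ ≤ x ∧ x ≤ V.d φ ∧ V.domLe ψ φ

/-- The partially defined extension of projection to `Ψ⁰`:
`π_x(φ·ψ⁻¹) = π_x(φ)·ψ⁻¹`. -/
noncomputable def extProj (V : SVA P D) (η : P) (x : D) : P :=
  letI := Classical.propDecidable (V.extProjDef η x)
  if h : V.extProjDef η x then V.p h.choose x * V.inv h.choose_spec.choose else η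

/-- The conditional `φ_{x|y} = π_x(φ)·(π_y(φ))⁻¹`. -/
def condit (V : SVA P D) (φ : P) (x y : D) : P := V.p φ x * V.inv (V.p φ y)

/-- The compositional operator `φ ▷ ψ = φ·ψ·(π_{x∧y}(ψ))⁻¹`. -/
noncomputable def comp (V : SVA P D) (φ ψ : P) : P :=
  φ * ψ * V.inv (V.extProj ψ (V.d φ ⊓ V.d ψ))

/-- An abstract density: all projections `π_z(η)`, `z ≤ d(η)`, exist. -/
def AbsDensity (V : SVA P D) (η : P) : Prop := ∀ z, z ≤ V.d η → V.extProjDef η z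

end SVA

variable {P : Type*} {D : Type*} [CommSemigroup P] [Lattice D]

/-- Uniqueness of the group inverse in a union of groups. -/
theorem SVA.inv_unique (V : SVA P D) {a u : P}
    (h1 : a * u = V.e a) (h2 : V.e u = V.e a) : u = V.inv a := by
  have he : V.e (V.inv a) = V.e a := V.e_inv a
  calc u = u * V.e a := by rw [← h2, V.mul_unit]
    _ = u * (a * V.inv a) := by rw [V.mul_inv]
    _ = (a * u) * V.inv a := by rw [← mul_assoc, mul_comm u a]
    _ = V.inv a * V.e a := by rw [h1, mul_comm]
    _ = V.inv a := by rw [← he, V.mul_unit]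

/-- The inverse is multiplicative. -/
theorem SVA.inv_mul (V : SVA P D) (b c : P) :
    V.inv (b * c) = V.inv b * V.inv c := by
  refine (V.inv_unique ?_ ?_).symm
  · rw [mul_mul_mul_comm, V.mul_inv, V.mul_inv, ← V.e_mul]
  · rw [V.e_mul, V.e_inv, V.e_inv, V.e_mul]

/-- If `d(ψ) = y ≤ x ≤ d(φ)`, then `(π_x(φ)·ψ)_{x|y} = φ_{x|y}·f_ψ`. -/
theorem SVA.conditional_of_product (V : SVA P D) {φ ψ : P} {x y : D}
    (hφ : φ ∈ V.Psi) (hψ : ψ ∈ V.Psi) (hd : V.d ψ = y)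
    (hyx : y ≤ x) (hx : x ≤ V.d φ) :
    V.condit (V.p φ x * ψ) x y = V.condit φ x y * V.e ψ := by
  set a := V.p φ x with ha
  have haPsi : a ∈ V.Psi := V.p_mem x hφ hx
  have hda : V.d a = x := V.d_p x hφ hx
  have hyφ : y ≤ V.d φ := hyx.trans hx
  -- p (a * ψ) x = a * ψ
  have h1 : V.p (a * ψ) x = a * ψ := by
    have := V.strong_comb x haPsi hψ hda.le (le_sup_of_le_left hda.ge)
    rw [this]
    have hxy : x ⊓ V.d ψ = y := by rw [hd]; exact inf_eq_right.mpr hyx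
    rw [hxy, ← hd, V.p_self hψ]
  -- p (a * ψ) y = ψ * p φ y
  have h2 : V.p (a * ψ) y = ψ * V.p φ y := by
    rw [mul_comm a ψ]
    have := V.strong_comb y hψ haPsi hd.le (le_sup_of_le_left hd.ge)
    rw [this]
    have hya : y ⊓ V.d a = y := by rw [hda]; exact inf_eq_left.mpr hyx
    rw [hya, ha, V.p_trans y x hφ hyx hx]
  have hpyPsi : V.p φ y ∈ V.Psi := V.p_mem y hφ hyφ
  unfold SVA.condit
  rw [h1, h2, V.inv_mul, mul_comm (V.inv ψ), mul_mul_mul_comm, V.mul_inv ψ, ← ha]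
end

section
/- In a separative valuation algebra over a modular lattice, if π_{x∧y}(φ) = π_{x∧y}(ψ) for abstract densities φ,ψ with d(φ)=x, d(ψ)=y, then composition is commutative: φ ▷ ψ = ψ ▷ φ. Conversely, in a cancellative valuation algebra, φ ▷ ψ = ψ ▷ φ implies π_{x∧y}(φ) = π_{x∧y}(ψ). -/
variable {P : Type*} {D : Type*} [CommSemigroup P] [Lattice D]

lemma SVA.d_extProj (V : SVA P D) {η : P} {x : D} (h : V.extProjDef η x) :
    V.d (V.extProj η x) = x := by
  unfold SVA.extProj
  rw [dif_pos h]
  obtain ⟨hmem, -, -, hle, hle', -⟩ := h.choose_spec.choose_spec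
  rw [V.d_mul, V.d_inv, V.d_p x hmem hle', sup_eq_left]
  exact hle

/-- Over a modular lattice, if `π_{x∧y}(φ) = π_{x∧y}(ψ)` then composition is
commutative: `φ ▷ ψ = ψ ▷ φ`; conversely, in a cancellative valuation algebra,
`φ ▷ ψ = ψ ▷ φ` implies `π_{x∧y}(φ) = π_{x∧y}(ψ)`. -/
theorem SVA.comp_comm_iff_consistent [IsModularLattice D] (V : SVA P D) {φ ψ : P}
    (hφ : V.AbsDensity φ) (hψ : V.AbsDensity ψ)
    (hdom : V.domLe (V.extProj ψ (V.d φ ⊓ V.d ψ)) (V.extProj φ (V.d φ ⊓ V.d ψ))) :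
    (V.extProj φ (V.d φ ⊓ V.d ψ) = V.extProj ψ (V.d φ ⊓ V.d ψ) →
      V.comp φ ψ = V.comp ψ φ) ∧
    ((∀ a b c : P, V.d b = V.d c → a * b = a * c → b = c) →
      V.domLe (V.extProj φ (V.d φ ⊓ V.d ψ)) (V.extProj ψ (V.d φ ⊓ V.d ψ)) →
      V.comp φ ψ = V.comp ψ φ →
      V.extProj φ (V.d φ ⊓ V.d ψ) = V.extProj ψ (V.d φ ⊓ V.d ψ)) := by
  set m := V.d φ ⊓ V.d ψ with hm
  have hdφ : V.d (V.extProj φ m) = m := V.d_extProj (hφ m inf_le_left)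
  have hdψ : V.d (V.extProj ψ m) = m := V.d_extProj (hψ m inf_le_right)
  constructor
  · intro h
    unfold SVA.comp
    rw [inf_comm (V.d ψ) (V.d φ), ← hm, h, mul_comm φ ψ]
  · intro hc hdom' heq
    unfold SVA.comp at heq
    rw [inf_comm (V.d ψ) (V.d φ), ← hm, mul_comm ψ φ] at heq
    have hinv : V.inv (V.extProj ψ m) = V.inv (V.extProj φ m) :=
      hc (φ * ψ) _ _ (by rw [V.d_inv, V.d_inv, hdφ, hdψ]) heq
    have he : V.e (V.extProj φ m) = V.e (V.extProj ψ m) := by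
      calc V.e (V.extProj φ m) = V.e (V.extProj ψ m) * V.e (V.extProj φ m) := hdom.symm
        _ = V.e (V.extProj φ m) * V.e (V.extProj ψ m) := mul_comm _ _
        _ = V.e (V.extProj ψ m) := hdom'
    have h1 : V.inv (V.extProj ψ m) * V.extProj φ m
        = V.inv (V.extProj ψ m) * V.extProj ψ m := by
      calc V.inv (V.extProj ψ m) * V.extProj φ m
          = V.extProj φ m * V.inv (V.extProj φ m) := by rw [hinv, mul_comm]
        _ = V.e (V.extProj φ m) := V.mul_inv _
        _ = V.e (V.extProj ψ m) := he
        _ = V.extProj ψ m * V.inv (V.extProj ψ m) := (V.mul_inv _).symm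
        _ = V.inv (V.extProj ψ m) * V.extProj ψ m := mul_comm _ _
    exact hc _ _ _ (by rw [hdφ, hdψ]) h1
end
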